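/- With f as in the standard recurrence f_{0,k}=1, f_{j,k} = ((2k+1)/2) f_{j-1,k+1} + (2k+1/2) f_{j-1,k} + k f_{j-1,k-1}, and Ã^{(e)}_{j,k} = ∫_ℝ q^{2j} ψ_{2k}(q) dq, we have the closed form Ã^{(e)}_{j,k} = f_{j,k} · √2 · π^{1/4} · √((2k)!)/(2^k k!) for all j, k ≥ 0. -/

import Mathlib

open MeasureTheory Real

/-- Physicists' Hermite polynomials. -/
noncomputable def H : ℕ → ℝ → ℝ
  | 0 => fun _ => 1
  | 1 => fun q => 2 * q
  | (n + 2) => fun q => 2 * q * H (n + 1) q - 2 * (n + 1) * H n q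

/-- Normalized Hermite functions. -/
noncomputable def ψ (n : ℕ) (q : ℝ) : ℝ :=
  (Real.sqrt (2 ^ n * n.factorial * Real.sqrt Real.pi))⁻¹ * H n q * Real.exp (-q ^ 2 / 2)

/-- The two-index recurrence f_{j,k} (real valued). -/
noncomputable def f : ℕ → ℤ → ℝ
  | 0, _ => 1
  | (j + 1), k =>
      ((2 * (k : ℝ) + 1) / 2) * f j (k + 1) + (2 * (k : ℝ) + 1 / 2) * f j k + (k : ℝ) * f j (k - 1)

/-- Even moments of even Hermite functions. -/
noncomputable def Ae (j k : ℕ) : ℝ := ∫ q : ℝ, q ^ (2 * j) * ψ (2 * k) q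

open Filter

lemma integrable_pow_gauss (m : ℕ) :
    Integrable fun q : ℝ => q ^ m * Real.exp (-q ^ 2 / 2) := by
  have h := integrable_rpow_mul_exp_neg_mul_sq (b := 1/2) one_half_pos
      (s := (m : ℝ)) (lt_of_lt_of_le neg_one_lt_zero (Nat.cast_nonneg m))
  exact h.congr (Filter.Eventually.of_forall fun x => by
    simp only [Real.rpow_natCast]
    rw [show -(1/2 : ℝ) * x ^ 2 = -x ^ 2 / 2 by ring])

lemma integrable_H : ∀ (n m : ℕ), Integrable fun q : ℝ => q ^ m * H n q * Real.exp (-q ^ 2 / 2)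
  | 0, m => by
    exact (integrable_pow_gauss m).congr (Filter.Eventually.of_forall fun q => by simp [H])
  | 1, m => by
    exact ((integrable_pow_gauss (m+1)).const_mul 2).congr
      (Filter.Eventually.of_forall fun q => by simp [H]; ring)
  | (n+2), m => by
    have h1 := (integrable_H (n+1) (m+1)).const_mul 2
    have h2 := (integrable_H n m).const_mul (2*((n:ℝ)+1))
    exact (h1.sub h2).congr (Filter.Eventually.of_forall fun q => by simp [H]; ring)

lemma H_succ (n : ℕ) (q : ℝ) : H (n+1) q = 2*q*H n q - 2*(n:ℝ)*H (n-1) q := by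
  cases n with
  | zero => simp [H]
  | succ k => simp [H]

lemma q_mul_H (n : ℕ) (q : ℝ) :
    q * H n q = H (n+1) q / 2 + (n:ℝ) * H (n-1) q := by
  rw [H_succ]; ring

noncomputable def I (m n : ℕ) : ℝ := ∫ q : ℝ, q ^ m * H n q * Real.exp (-q ^ 2 / 2)

lemma I_rec (m n : ℕ) : I (m+1) n = I m (n+1) / 2 + (n:ℝ) * I m (n-1) := by
  have key : ∀ q : ℝ, q ^ (m+1) * H n q * Real.exp (-q^2/2)
      = (1/2) * (q^m * H (n+1) q * Real.exp (-q^2/2))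
        + (n:ℝ) * (q^m * H (n-1) q * Real.exp (-q^2/2)) := by
    intro q
    have h := q_mul_H n q
    rw [pow_succ, show q^m * q * H n q = q^m * (q * H n q) by ring, h]
    ring
  unfold I
  simp_rw [key]
  rw [integral_add ((integrable_H (n+1) m).const_mul _) ((integrable_H (n-1) m).const_mul _),
    integral_const_mul, integral_const_mul]
  ring

lemma hasDerivAt_H : ∀ (n : ℕ) (q : ℝ), HasDerivAt (H n) (2*(n:ℝ) * H (n-1) q) q
  | 0, q => by
    have : H 0 = fun _ : ℝ => (1:ℝ) := by funext x; simp [H]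
    rw [this]; simpa using (hasDerivAt_const q (1:ℝ))
  | 1, q => by
    have : H 1 = fun x : ℝ => 2 * x := by funext x; simp [H]
    rw [this]
    have := (hasDerivAt_id q).const_mul (2:ℝ)
    simpa [H] using this
  | (n+2), q => by
    have h1 := hasDerivAt_H (n+1) q
    have h2 := hasDerivAt_H n q
    have hq : HasDerivAt (fun x : ℝ => 2*x*H (n+1) x - 2*((n:ℝ)+1)*H n x)
        (2 * H (n+1) q + 2*q*(2*((n:ℝ)+1) * H n q) - 2*((n:ℝ)+1)*(2*(n:ℝ)*H (n-1) q)) q := by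
      have ha := ((hasDerivAt_id q).const_mul (2:ℝ)).mul h1
      have hb := h2.const_mul (2*((n:ℝ)+1))
      have := ha.sub hb
      simp only [id_eq, Nat.add_sub_cancel] at this
      refine this.congr_deriv ?_
      push_cast; ring
    have hH : H (n+2) = fun x : ℝ => 2*x*H (n+1) x - 2*((n:ℝ)+1)*H n x := by
      funext x; simp [H]
    rw [hH]
    convert hq using 1
    rw [show n+2-1 = n+1 from rfl, H_succ n q]
    push_cast; ring

lemma hasDerivAt_HE (n : ℕ) (q : ℝ) :
    HasDerivAt (fun x : ℝ => H n x * Real.exp (-x^2/2))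
      ((2*(n:ℝ) * H (n-1) q - q * H n q) * Real.exp (-q^2/2)) q := by
  have h1 : HasDerivAt (fun x : ℝ => -x^2/2) (-q) q := by
    have := ((hasDerivAt_pow 2 q).neg.div_const 2)
    refine this.congr_deriv ?_
    simp; ring
  have hE : HasDerivAt (fun x : ℝ => Real.exp (-x^2/2)) (-q * Real.exp (-q^2/2)) q := by
    have := h1.exp
    convert this using 1
    ring
  have := (hasDerivAt_H n q).mul hE
  refine this.congr_deriv ?_
  ring

lemma tendsto_pow_gauss_atTop (m : ℕ) :
    Tendsto (fun q : ℝ => q ^ m * Real.exp (-q^2/2)) atTop (nhds 0) := by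
  have h := (rpow_mul_exp_neg_mul_sq_isLittleO_exp_neg one_half_pos (m:ℝ)).isBigO
  have h3 : Tendsto (fun x : ℝ => Real.exp (-(1/2) * x)) atTop (nhds 0) := by
    have := Real.tendsto_exp_neg_atTop_nhds_zero.comp
      ((tendsto_id (α := ℝ)).const_mul_atTop one_half_pos)
    exact this.congr fun x => by simp [Function.comp]
  have h2 := h.trans_tendsto h3
  exact h2.congr fun x => by
    simp only [Real.rpow_natCast]
    rw [show -(1/2 : ℝ) * x ^ 2 = -x ^ 2 / 2 by ring]

lemma tendsto_pow_gauss_atBot (m : ℕ) :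
    Tendsto (fun q : ℝ => q ^ m * Real.exp (-q^2/2)) atBot (nhds 0) := by
  have h := ((tendsto_pow_gauss_atTop m).comp tendsto_neg_atBot_atTop).const_mul ((-1:ℝ)^m)
  rw [mul_zero] at h
  refine h.congr fun q => ?_
  have h1 : (-1:ℝ)^m * (-1)^m = 1 := by rw [← mul_pow]; norm_num
  simp only [Function.comp]
  rw [show ((-q)^2 : ℝ) = q^2 by ring, neg_pow]
  linear_combination (q ^ m * Real.exp (-q^2/2)) * h1

lemma tendsto_H_gauss {l : Filter ℝ}
    (hl : ∀ m, Tendsto (fun q : ℝ => q^m * Real.exp (-q^2/2)) l (nhds 0)) :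
    ∀ (n m : ℕ), Tendsto (fun q : ℝ => q^m * H n q * Real.exp (-q^2/2)) l (nhds 0)
  | 0, m => (hl m).congr fun q => by simp [H]
  | 1, m => by
    have := (hl (m+1)).const_mul (2:ℝ)
    rw [mul_zero] at this
    exact this.congr fun q => by simp [H]; ring
  | (n+2), m => by
    have h1 := (tendsto_H_gauss hl (n+1) (m+1)).const_mul (2:ℝ)
    have h2 := (tendsto_H_gauss hl n m).const_mul (2*((n:ℝ)+1))
    have := h1.sub h2
    rw [mul_zero, mul_zero, sub_zero] at this
    exact this.congr fun q => by simp [H]; ring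

lemma integral_deriv_zero {G G' : ℝ → ℝ} (hd : ∀ x, HasDerivAt G (G' x) x)
    (hi : Integrable G') (ht : Tendsto G atTop (nhds 0)) (hb : Tendsto G atBot (nhds 0)) :
    ∫ x, G' x = 0 := by
  have h1 : ∫ x in Set.Iic (0:ℝ), G' x = G 0 - 0 :=
    integral_Iic_of_hasDerivAt_of_tendsto' (fun x _ => hd x) hi.integrableOn hb
  have h2 : ∫ x in Set.Ioi (0:ℝ), G' x = 0 - G 0 :=
    integral_Ioi_of_hasDerivAt_of_tendsto' (fun x _ => hd x) hi.integrableOn ht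
  rw [← intervalIntegral.integral_Iic_add_Ioi hi.integrableOn hi.integrableOn, h1, h2]; ring

lemma I_one (n : ℕ) : I 1 n = 2*(n:ℝ) * I 0 (n-1) := by
  have hint : Integrable (fun q : ℝ => (2*(n:ℝ)*H (n-1) q - q * H n q) * Real.exp (-q^2/2)) := by
    have h1 := (integrable_H (n-1) 0).const_mul (2*(n:ℝ))
    have h2 := integrable_H n 1
    exact (h1.sub h2).congr (Filter.Eventually.of_forall fun q => by simp; ring)
  have ht := tendsto_H_gauss (fun m => tendsto_pow_gauss_atTop m) n 0
  have hb := tendsto_H_gauss (fun m => tendsto_pow_gauss_atBot m) n 0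
  have ht' : Tendsto (fun q : ℝ => H n q * Real.exp (-q^2/2)) atTop (nhds 0) :=
    ht.congr fun q => by simp
  have hb' : Tendsto (fun q : ℝ => H n q * Real.exp (-q^2/2)) atBot (nhds 0) :=
    hb.congr fun q => by simp
  have hz := integral_deriv_zero (hasDerivAt_HE n) hint ht' hb'
  have hsplit : (∫ q : ℝ, (2*(n:ℝ)*H (n-1) q - q * H n q) * Real.exp (-q^2/2))
      = 2*(n:ℝ) * I 0 (n-1) - I 1 n := by
    unfold I
    have : (fun q : ℝ => (2*(n:ℝ)*H (n-1) q - q * H n q) * Real.exp (-q^2/2))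
        = fun q : ℝ => 2*(n:ℝ)*(q^0 * H (n-1) q * Real.exp (-q^2/2))
            - q^1 * H n q * Real.exp (-q^2/2) := by
      funext q; simp; ring
    rw [this, integral_sub ((integrable_H (n-1) 0).const_mul _) (integrable_H n 1),
      integral_const_mul]
  linarith [hz, hsplit]

noncomputable def D (k : ℕ) : ℝ := Real.sqrt (2*Real.pi) * (2*k).factorial / k.factorial

lemma D_succ (k : ℕ) : D (k+1) = 2*(2*(k:ℝ)+1) * D k := by
  unfold D
  have h : (2*(k+1)).factorial = (2*k+2) * ((2*k+1) * (2*k).factorial) := by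
    rw [show 2*(k+1) = 2*k+1+1 by ring, Nat.factorial_succ, Nat.factorial_succ]
  rw [h, Nat.factorial_succ]
  have hk : ((k.factorial : ℝ)) ≠ 0 := Nat.cast_ne_zero.2 k.factorial_ne_zero
  push_cast
  field_simp

lemma I_zero_even (k : ℕ) : I 0 (2*k) = D k := by
  induction k with
  | zero =>
    unfold I D
    simp only [Nat.mul_zero, pow_zero, one_mul, Nat.factorial_zero]
    have h0 : (fun q : ℝ => H 0 q * Real.exp (-q^2/2))
        = fun q : ℝ => Real.exp (-(1/2) * q^2) := by
      funext q; simp [H]; ring_nf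
    rw [h0, integral_gaussian]
    rw [show (Real.pi / (1/2)) = 2*Real.pi by ring]
    norm_num
  | succ k ih =>
    have h1 : I 0 (2*(k+1)) = 2 * I 1 (2*k+1) - 2*(2*(k:ℝ)+1) * I 0 (2*k) := by
      unfold I
      have : (fun q : ℝ => q^0 * H (2*(k+1)) q * Real.exp (-q^2/2))
          = fun q : ℝ => 2*(q^1 * H (2*k+1) q * Real.exp (-q^2/2))
              - (2*(2*(k:ℝ)+1))*(q^0 * H (2*k) q * Real.exp (-q^2/2)) := by
        funext q
        have hs := H_succ (2*k+1) q
        rw [show 2*(k+1) = (2*k+1)+1 by ring, hs]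
        push_cast
        simp
        ring
      rw [this, integral_sub ((integrable_H (2*k+1) 1).const_mul _)
        ((integrable_H (2*k) 0).const_mul _), integral_const_mul, integral_const_mul]
    have h2 := I_one (2*k+1)
    simp only [Nat.add_sub_cancel] at h2
    rw [h1, h2, D_succ, ih]
    push_cast
    ring

lemma I_step0 (m : ℕ) : I (m+2) 0 = I m 2/4 + I m 0/2 := by
  have r1 := I_rec (m+1) 0
  have r2 := I_rec m 1
  norm_num at r1 r2
  rw [show m+2 = m+1+1 by omega, r1, r2]
  ring

lemma I_step (m k : ℕ) :
    I (m+2) (2*k+2) = I m (2*k+4)/4 + (2*((k:ℝ)+1) + 1/2) * I m (2*k+2)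
      + (2*(k:ℝ)+2)*(2*(k:ℝ)+1) * I m (2*k) := by
  have r1 := I_rec (m+1) (2*k+2)
  have r2 := I_rec m (2*k+3)
  have r3 := I_rec m (2*k+1)
  rw [show 2*k+2+1 = 2*k+3 by omega, show 2*k+2-1 = 2*k+1 by omega] at r1
  rw [show 2*k+3+1 = 2*k+4 by omega, show 2*k+3-1 = 2*k+2 by omega] at r2
  rw [show 2*k+1+1 = 2*k+2 by omega, show 2*k+1-1 = 2*k by omega] at r3
  rw [show m+2 = m+1+1 by omega, r1, r2, r3]
  push_cast
  ring

lemma I_closed : ∀ (j k : ℕ), I (2*j) (2*k) = f j (k:ℤ) * D k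
  | 0, k => by simpa [f] using I_zero_even k
  | (j+1), 0 => by
    have i1 := I_closed j 1
    have i0 := I_closed j 0
    rw [show 2*1 = 2 by omega] at i1
    rw [show 2*0 = 0 by omega] at i0
    rw [show 2*(j+1) = 2*j+2 by omega, show 2*0 = 0 by omega, I_step0 (2*j), i1, i0,
      show ((0:ℕ):ℤ) = 0 by norm_num]
    simp only [f]
    rw [show (0:ℤ)+1 = ((1:ℕ):ℤ) by norm_num, D_succ 0]
    push_cast
    ring
  | (j+1), (k'+1) => by
    have i2 := I_closed j (k'+2)
    have i1 := I_closed j (k'+1)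
    have i0 := I_closed j k'
    rw [show 2*(k'+2) = 2*k'+4 by omega] at i2
    rw [show 2*(k'+1) = 2*k'+2 by omega] at i1
    rw [show 2*(j+1) = 2*j+2 by omega, show 2*(k'+1) = 2*k'+2 by omega, I_step (2*j) k',
      i2, i1, i0]
    simp only [f]
    rw [show ((k'+1:ℕ):ℤ)+1 = ((k'+2:ℕ):ℤ) by push_cast; ring,
      show ((k'+1:ℕ):ℤ)-1 = ((k':ℕ):ℤ) by push_cast; ring,
      D_succ (k'+1), D_succ k']
    push_cast
    ring

theorem Ae_closed_form (j k : ℕ) :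
    Ae j k =
      f j (k : ℤ) *
        (Real.sqrt 2 * Real.pi ^ ((1 : ℝ) / 4) * Real.sqrt ((2 * k).factorial) /
          (2 ^ k * k.factorial)) := by
  have hA : Ae j k
      = (Real.sqrt (2^(2*k) * (2*k).factorial * Real.sqrt Real.pi))⁻¹ * I (2*j) (2*k) := by
    unfold Ae ψ I
    rw [← integral_const_mul]
    congr 1; funext q; ring
  rw [hA, I_closed j k]
  unfold D
  have hsq : Real.sqrt ((2:ℝ)^(2*k) * (2*k).factorial * Real.sqrt Real.pi)
      = 2^k * Real.sqrt ((2*k).factorial) * Real.pi ^ ((1:ℝ)/4) := by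
    rw [Real.sqrt_mul (by positivity), Real.sqrt_mul (by positivity)]
    congr 1
    · congr 1
      rw [show (2:ℝ)^(2*k) = ((2:ℝ)^k)^2 by rw [← pow_mul, Nat.mul_comm], Real.sqrt_sq (by positivity)]
    · rw [Real.sqrt_eq_rpow, Real.sqrt_eq_rpow, ← Real.rpow_mul Real.pi_pos.le]
      norm_num
  rw [hsq, Real.sqrt_mul (by norm_num : (0:ℝ) ≤ 2)]
  set s := Real.sqrt (((2*k).factorial : ℝ)) with hs
  set p := Real.pi ^ ((1:ℝ)/4) with hp
  have hss : ((2*k).factorial : ℝ) = s * s := (Real.mul_self_sqrt (by positivity)).symm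
  have hpp : Real.sqrt Real.pi = p * p := by
    rw [hp, ← Real.rpow_add Real.pi_pos, Real.sqrt_eq_rpow]; norm_num
  rw [hss, hpp]
  have h1 : s ≠ 0 := by
    rw [hs]; exact ne_of_gt (Real.sqrt_pos.2 (by positivity))
  have h2 : p ≠ 0 := by rw [hp]; positivity
  have h3 : ((k.factorial:ℝ)) ≠ 0 := Nat.cast_ne_zero.2 k.factorial_ne_zero
  have h4 : ((2:ℝ)^k) ≠ 0 := by positivity
  field_simp
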